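/- Let λ > 0, μ* ∈ ℝ^d, and x₁,…,x_k ∈ ℝ^d, η₁,…,η_k ∈ ℝ. Let y_i = ⟨μ*, x_i⟩ + η_i, Z_k = λI + ∑_{i=1}^k x_i x_iᵀ, b_k = ∑_{i=1}^k y_i x_i, and μ_k = Z_k^{-1} b_k. Then ‖μ_k - μ*‖_{Z_k} ≤ ‖∑_{i=1}^k x_i η_i‖_{Z_k^{-1}} + √λ ‖μ*‖₂. -/

import Mathlib

open Matrix

private lemma cs_aux {d : ℕ} (M : Matrix (Fin d) (Fin d) ℝ)
    (hnn : ∀ v, 0 ≤ v ⬝ᵥ M.mulVec v)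
    (hsym : ∀ u v : Fin d → ℝ, u ⬝ᵥ M.mulVec v = v ⬝ᵥ M.mulVec u)
    (u v : Fin d → ℝ) :
    (u ⬝ᵥ M.mulVec v) ^ 2 ≤ (u ⬝ᵥ M.mulVec u) * (v ⬝ᵥ M.mulVec v) := by
  have h := discrim_le_zero (a := u ⬝ᵥ M.mulVec u) (b := 2 * (u ⬝ᵥ M.mulVec v))
      (c := v ⬝ᵥ M.mulVec v) (fun t => by
        have h0 := hnn (t • u + v)
        have hexp : (t • u + v) ⬝ᵥ M.mulVec (t • u + v)
            = (u ⬝ᵥ M.mulVec u) * (t * t) + (2 * (u ⬝ᵥ M.mulVec v)) * t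
              + v ⬝ᵥ M.mulVec v := by
          simp only [mulVec_add, mulVec_smul, dotProduct_add, add_dotProduct,
            smul_dotProduct, dotProduct_smul, smul_eq_mul]
          rw [hsym v u]; ring
        linarith [hexp ▸ h0])
  rw [discrim] at h
  nlinarith [h]

private lemma tri_aux {d : ℕ} (M : Matrix (Fin d) (Fin d) ℝ)
    (hnn : ∀ v, 0 ≤ v ⬝ᵥ M.mulVec v)
    (hsym : ∀ u v : Fin d → ℝ, u ⬝ᵥ M.mulVec v = v ⬝ᵥ M.mulVec u)
    (u v : Fin d → ℝ) :
    Real.sqrt ((u + v) ⬝ᵥ M.mulVec (u + v)) ≤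
      Real.sqrt (u ⬝ᵥ M.mulVec u) + Real.sqrt (v ⬝ᵥ M.mulVec v) := by
  set a := u ⬝ᵥ M.mulVec u with ha'
  set b := v ⬝ᵥ M.mulVec v with hb'
  have hB : u ⬝ᵥ M.mulVec v ≤ Real.sqrt a * Real.sqrt b := by
    calc u ⬝ᵥ M.mulVec v ≤ |u ⬝ᵥ M.mulVec v| := le_abs_self _
      _ = Real.sqrt ((u ⬝ᵥ M.mulVec v) ^ 2) := (Real.sqrt_sq_eq_abs _).symm
      _ ≤ Real.sqrt (a * b) := Real.sqrt_le_sqrt (cs_aux M hnn hsym u v)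
      _ = Real.sqrt a * Real.sqrt b := Real.sqrt_mul (hnn u) _
  have hexp : (u + v) ⬝ᵥ M.mulVec (u + v) = a + 2 * (u ⬝ᵥ M.mulVec v) + b := by
    simp only [mulVec_add, dotProduct_add, add_dotProduct, ha', hb']
    rw [hsym v u]; ring
  rw [hexp]
  have h2 : a + 2 * (u ⬝ᵥ M.mulVec v) + b ≤ (Real.sqrt a + Real.sqrt b) ^ 2 := by
    have h3 := Real.sq_sqrt (hnn u)
    have h4 := Real.sq_sqrt (hnn v)
    nlinarith
  calc Real.sqrt (a + 2 * (u ⬝ᵥ M.mulVec v) + b)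
      ≤ Real.sqrt ((Real.sqrt a + Real.sqrt b) ^ 2) := Real.sqrt_le_sqrt h2
    _ = Real.sqrt a + Real.sqrt b := Real.sqrt_sq (by positivity)

private lemma dp_sum {d k : ℕ} (v : Fin d → ℝ) (f : Fin k → Fin d → ℝ) :
    v ⬝ᵥ (∑ i, f i) = ∑ i, v ⬝ᵥ f i := by
  simp only [dotProduct, Finset.sum_apply, Finset.mul_sum]
  exact Finset.sum_comm

private lemma vmv_mulVec {d : ℕ} (w u v : Fin d → ℝ) :
    (vecMulVec w u).mulVec v = (u ⬝ᵥ v) • w := by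
  ext j
  simp [vecMulVec_apply, mulVec, dotProduct, Finset.mul_sum, mul_comm, mul_assoc, mul_left_comm]

theorem stmt_10 (d k : ℕ) (lam : ℝ) (hlam : 0 < lam) (μs : Fin d → ℝ)
    (x : Fin k → Fin d → ℝ) (η : Fin k → ℝ) (y : Fin k → ℝ)
    (hy : ∀ i, y i = μs ⬝ᵥ x i + η i)
    (Z : Matrix (Fin d) (Fin d) ℝ)
    (hZ : Z = lam • (1 : Matrix (Fin d) (Fin d) ℝ) + ∑ i, vecMulVec (x i) (x i))
    (b : Fin d → ℝ) (hb : b = ∑ i, y i • x i)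
    (μk : Fin d → ℝ) (hμk : μk = Z⁻¹.mulVec b) :
    Real.sqrt ((μk - μs) ⬝ᵥ Z.mulVec (μk - μs)) ≤
      Real.sqrt ((∑ i, η i • x i) ⬝ᵥ Z⁻¹.mulVec (∑ i, η i • x i)) +
        Real.sqrt lam * Real.sqrt (μs ⬝ᵥ μs) := by
  have hmv : ∀ v, Z.mulVec v = lam • v + ∑ i, (x i ⬝ᵥ v) • x i := by
    intro v
    rw [hZ, add_mulVec, smul_mulVec, one_mulVec]
    congr 1
    rw [show (∑ i, vecMulVec (x i) (x i)).mulVec v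
        = ∑ i, (vecMulVec (x i) (x i)).mulVec v from
      map_sum (mulVec.addMonoidHomLeft v) _ _]
    exact Finset.sum_congr rfl fun i _ => vmv_mulVec _ _ _
  have hqf : ∀ v : Fin d → ℝ, v ⬝ᵥ Z.mulVec v = lam * (v ⬝ᵥ v) + ∑ i, (x i ⬝ᵥ v) ^ 2 := by
    intro v
    rw [hmv, dotProduct_add, dotProduct_smul, dp_sum]
    simp only [smul_eq_mul, dotProduct_smul]
    congr 1
    refine Finset.sum_congr rfl fun i _ => ?_
    rw [dotProduct_comm v (x i)]; ring
  have hsymZ : ∀ u v : Fin d → ℝ, u ⬝ᵥ Z.mulVec v = v ⬝ᵥ Z.mulVec u := by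
    intro u v
    rw [hmv, hmv, dotProduct_add, dotProduct_add, dp_sum, dp_sum]
    simp only [dotProduct_smul, smul_eq_mul]
    rw [dotProduct_comm u v]
    congr 1
    refine Finset.sum_congr rfl fun i _ => ?_
    rw [dotProduct_comm (x i) u, dotProduct_comm (x i) v]; ring
  have hZnn : ∀ v : Fin d → ℝ, 0 ≤ v ⬝ᵥ Z.mulVec v := by
    intro v
    rw [hqf]
    have h1 : 0 ≤ v ⬝ᵥ v := by
      simp only [dotProduct]
      exact Finset.sum_nonneg fun j _ => mul_self_nonneg _
    have h2 : 0 ≤ ∑ i, (x i ⬝ᵥ v) ^ 2 := Finset.sum_nonneg fun i _ => sq_nonneg _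
    nlinarith
  have hZpd : Z.PosDef := by
    refine PosDef.of_dotProduct_mulVec_pos ?_ fun v hv => ?_
    · rw [IsHermitian]
      ext i j
      simp only [conjTranspose_apply, star_trivial]
      have := hsymZ (Pi.single j 1) (Pi.single i 1)
      simpa [mulVec, dotProduct, Pi.single_apply] using this
    · simp only [star_trivial]
      rw [hqf]
      have h1a : (0:ℝ) ≤ v ⬝ᵥ v := Finset.sum_nonneg fun j _ => mul_self_nonneg _
      have h1b : v ⬝ᵥ v ≠ 0 := fun h => hv (dotProduct_self_eq_zero.mp h)
      have h1 : 0 < v ⬝ᵥ v := lt_of_le_of_ne h1a (Ne.symm h1b)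
      have h2 : 0 ≤ ∑ i, (x i ⬝ᵥ v) ^ 2 := Finset.sum_nonneg fun i _ => sq_nonneg _
      nlinarith
  have hdet : IsUnit Z.det := hZpd.det_pos.ne'.isUnit
  have hZinv : Z⁻¹ * Z = 1 := nonsing_inv_mul Z hdet
  have hZinv' : Z * Z⁻¹ = 1 := mul_nonsing_inv Z hdet
  -- Z⁻¹ quadratic identities
  have hinvqf : ∀ v : Fin d → ℝ, v ⬝ᵥ Z⁻¹.mulVec v = (Z⁻¹.mulVec v) ⬝ᵥ Z.mulVec (Z⁻¹.mulVec v) := by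
    intro v
    rw [mulVec_mulVec, hZinv', one_mulVec, dotProduct_comm]
  have hinvnn : ∀ v : Fin d → ℝ, 0 ≤ v ⬝ᵥ Z⁻¹.mulVec v := fun v => (hinvqf v) ▸ hZnn _
  have hinvsym : ∀ u v : Fin d → ℝ, u ⬝ᵥ Z⁻¹.mulVec v = v ⬝ᵥ Z⁻¹.mulVec u := by
    intro u v
    have h1 : u = Z.mulVec (Z⁻¹.mulVec u) := by rw [mulVec_mulVec, hZinv', one_mulVec]
    have h2 : v = Z.mulVec (Z⁻¹.mulVec v) := by rw [mulVec_mulVec, hZinv', one_mulVec]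
    calc u ⬝ᵥ Z⁻¹.mulVec v = (Z.mulVec (Z⁻¹.mulVec u)) ⬝ᵥ Z⁻¹.mulVec v := by rw [← h1]
      _ = (Z⁻¹.mulVec v) ⬝ᵥ Z.mulVec (Z⁻¹.mulVec u) := dotProduct_comm _ _
      _ = (Z⁻¹.mulVec u) ⬝ᵥ Z.mulVec (Z⁻¹.mulVec v) := hsymZ _ _
      _ = (Z.mulVec (Z⁻¹.mulVec v)) ⬝ᵥ Z⁻¹.mulVec u := dotProduct_comm _ _
      _ = v ⬝ᵥ Z⁻¹.mulVec u := by rw [← h2]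
  -- key decomposition
  set S : Fin d → ℝ := ∑ i, η i • x i with hS
  have hbw : b = Z.mulVec μs + (S - lam • μs) := by
    rw [hb, hmv]
    have : ∀ i : Fin k, y i • x i = (x i ⬝ᵥ μs) • x i + η i • x i := by
      intro i
      rw [hy i, add_smul, dotProduct_comm]
    rw [Finset.sum_congr rfl fun i _ => this i, Finset.sum_add_distrib]
    ext j; simp [hS]; ring
  have hdiff : μk - μs = Z⁻¹.mulVec (S - lam • μs) := by
    have hμs : Z⁻¹.mulVec (Z.mulVec μs) = μs := by rw [mulVec_mulVec, hZinv, one_mulVec]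
    rw [hμk, hbw, mulVec_add, hμs]
    abel
  set w : Fin d → ℝ := S - lam • μs with hw
  have hLHS : (μk - μs) ⬝ᵥ Z.mulVec (μk - μs) = w ⬝ᵥ Z⁻¹.mulVec w := by
    rw [hdiff, ← hinvqf]
  rw [hLHS]
  -- triangle inequality
  have htri := tri_aux Z⁻¹ hinvnn hinvsym S (-(lam • μs))
  have hw' : S + -(lam • μs) = w := by rw [hw]; abel
  rw [hw'] at htri
  have hneg : (-(lam • μs)) ⬝ᵥ Z⁻¹.mulVec (-(lam • μs)) = lam ^ 2 * (μs ⬝ᵥ Z⁻¹.mulVec μs) := by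
    rw [mulVec_neg, mulVec_smul, dotProduct_neg, neg_dotProduct, neg_neg,
      smul_dotProduct, dotProduct_smul]
    simp only [smul_eq_mul]; ring
  rw [hneg] at htri
  refine htri.trans (add_le_add le_rfl ?_)
  -- final bound: sqrt (lam^2 * q) ≤ sqrt lam * sqrt m
  set q : ℝ := μs ⬝ᵥ Z⁻¹.mulVec μs with hq
  set m : ℝ := μs ⬝ᵥ μs with hm
  set p : ℝ := (Z⁻¹.mulVec μs) ⬝ᵥ (Z⁻¹.mulVec μs) with hp
  have hqnn : 0 ≤ q := hinvnn μs
  have hmnn : 0 ≤ m := by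
    rw [hm]; simp only [dotProduct]; exact Finset.sum_nonneg fun j _ => mul_self_nonneg _
  have hcs : q ^ 2 ≤ m * p := by
    have h := cs_aux (1 : Matrix (Fin d) (Fin d) ℝ)
      (fun v => by simp only [one_mulVec]; exact Finset.sum_nonneg fun j _ => mul_self_nonneg _)
      (fun u v => by rw [one_mulVec, one_mulVec, dotProduct_comm]) μs (Z⁻¹.mulVec μs)
    simpa only [one_mulVec, ← hq, ← hm, ← hp] using h
  have hpq : lam * p ≤ q := by
    have := hqf (Z⁻¹.mulVec μs)
    have h2 : 0 ≤ ∑ i, (x i ⬝ᵥ Z⁻¹.mulVec μs) ^ 2 := Finset.sum_nonneg fun i _ => sq_nonneg _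
    have h3 : q = (Z⁻¹.mulVec μs) ⬝ᵥ Z.mulVec (Z⁻¹.mulVec μs) := hinvqf μs
    rw [h3, this, ← hp]
    linarith
  have hpnn : 0 ≤ p := by
    rw [hp]; simp only [dotProduct]; exact Finset.sum_nonneg fun j _ => mul_self_nonneg _
  have hkey : lam ^ 2 * q ≤ lam * m := by
    rcases eq_or_lt_of_le hqnn with h | h
    · rw [← h, mul_zero]; positivity
    · have h5 : lam * q ^ 2 ≤ m * q := by
        nlinarith [mul_le_mul_of_nonneg_left hcs hlam.le, mul_le_mul_of_nonneg_right hpq hmnn]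
      have h6 : lam * q ≤ m := by nlinarith [h, h5]
      nlinarith [mul_le_mul_of_nonneg_left h6 hlam.le]
  calc Real.sqrt (lam ^ 2 * q) ≤ Real.sqrt (lam * m) := Real.sqrt_le_sqrt hkey
    _ = Real.sqrt lam * Real.sqrt m := Real.sqrt_mul hlam.le _
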